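/- Let p be a C² probability density on ℝ^d with ‖p‖_∞ = p_max, such that in a neighborhood of the level set {p = t} the gradient of p is nonzero, and let C be a connected component of the closed t-level set L(t) with smooth boundary of positive minimal curvature radius. Let C₋(2ε) denote the connected component of L(t−2ε) containing C. Then there exists a constant D̄ > 0 such that for all sufficiently small ε > 0, μ(C₋(2ε) \ C) ≤ D̄·ε, where μ is the measure with density p. -/

import Mathlib

set_option maxHeartbeats 1000000

open MeasureTheory Metric Set

section Aux

variable {d : ℕ}

local notation "E" => EuclideanSpace ℝ (Fin d)

/-- Riesz-type: a nonzero functional attains its norm at a unit vector. -/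
lemma exists_unit_eq_norm (f : E →L[ℝ] ℝ) (hf : f ≠ 0) :
    ∃ u : E, ‖u‖ = 1 ∧ f u = ‖f‖ := by
  set w := (InnerProductSpace.toDual ℝ E).symm f with hw
  have hwn : ‖w‖ = ‖f‖ := LinearIsometryEquiv.norm_map _ f
  have hwne : w ≠ 0 := by
    intro h
    apply hf
    have : ‖f‖ = 0 := by rw [← hwn, h, norm_zero]
    exact norm_eq_zero.mp this
  have hwpos : (0:ℝ) < ‖w‖ := norm_pos_iff.mpr hwne
  refine ⟨‖w‖⁻¹ • w, ?_, ?_⟩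
  · rw [norm_smul, norm_inv, norm_norm, inv_mul_cancel₀ (ne_of_gt hwpos)]
  · have happ : ∀ x : E, f x = inner ℝ w x := by
      intro x
      rw [hw]
      exact (InnerProductSpace.toDual_symm_apply).symm
    rw [happ, inner_smul_right, real_inner_self_eq_norm_sq]
    rw [← hwn]
    field_simp
/-- Lower-bound mean value inequality along a direction. -/
lemma incr_along {p : E → ℝ} (hp : Differentiable ℝ p) {u : E} {s : Set E}
    (hs : Convex ℝ s) {g : ℝ} (hg : ∀ y ∈ s, g ≤ fderiv ℝ p y u)
    {x : E} {τ : ℝ} (hτ : 0 ≤ τ) (hx : x ∈ s) (hxt : x + τ • u ∈ s) :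
    p x + g * τ ≤ p (x + τ • u) := by
  rcases eq_or_lt_of_le hτ with h | h
  · simp [← h]
  · set φ : ℝ → ℝ := fun r => p (x + r • u) with hφ
    have hder : ∀ r : ℝ, HasDerivAt φ ((fderiv ℝ p (x + r • u)) u) r := by
      intro r
      have h1 : HasDerivAt (fun r : ℝ => x + r • u) u r := by
        simpa using ((hasDerivAt_id r).smul_const u).const_add x
      exact ((hp (x + r • u)).hasFDerivAt).comp_hasDerivAt r h1
    have hcont : ContinuousOn φ (Icc 0 τ) :=
      (Continuous.comp (hp.continuous) (by continuity)).continuousOn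
    obtain ⟨c, hc, hceq⟩ := exists_hasDerivAt_eq_slope φ
      (fun r => (fderiv ℝ p (x + r • u)) u) h hcont (fun r _ => hder r)
    have hmem : x + c • u ∈ s := by
      have h1 : x + c • u = (1 - c / τ) • x + (c / τ) • (x + τ • u) := by
        have hτ0 : τ ≠ 0 := ne_of_gt h
        rw [smul_add, ← add_assoc, ← add_smul, smul_smul]
        rw [div_mul_cancel₀ _ hτ0]
        congr 1
        rw [sub_add_cancel, one_smul]
      rw [h1]
      have hc1 : 0 < c := hc.1
      have hc2 : c < τ := hc.2
      have hd1 : 0 ≤ 1 - c / τ := by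
        rw [sub_nonneg]
        exact div_le_one_of_le₀ (le_of_lt hc2) (le_of_lt h)
      have hd2 : 0 ≤ c / τ := div_nonneg (le_of_lt hc1) hτ
      exact hs hx hxt hd1 hd2 (by rw [sub_add_cancel])
    have hineq : g ≤ (φ τ - φ 0) / (τ - 0) := hceq ▸ hg _ hmem
    have : g * τ ≤ φ τ - φ 0 := by
      rw [sub_zero] at hineq
      calc g * τ ≤ ((φ τ - φ 0) / τ) * τ := by
            exact mul_le_mul_of_nonneg_right hineq hτ
        _ = φ τ - φ 0 := div_mul_cancel₀ _ (ne_of_gt h)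
    have hφ0 : φ 0 = p x := by simp [hφ]
    rw [hφ0] at this
    linarith [this]

lemma local_data {p : E → ℝ} (hp : ContDiff ℝ 2 p) {t : ℝ} {x₁ : E}
    (hx₁ : p x₁ = t) (hfx : fderiv ℝ p x₁ ≠ 0) :
    ∃ ρ > (0:ℝ), ∃ c > (0:ℝ), ∃ e > (0:ℝ),
      (∀ y ∈ ball x₁ ρ, t ≤ p y → y ∈ connectedComponentIn {z | t ≤ p z} x₁) ∧
      (∀ ε : ℝ, 0 < ε → ε < e →
        volume (ball x₁ ρ ∩ {y | t - 2*ε ≤ p y ∧ p y < t}) ≤ ENNReal.ofReal (c * ε)) := by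
  have hdiff : Differentiable ℝ p := hp.differentiable (by norm_num)
  set g : ℝ := ‖fderiv ℝ p x₁‖ with hgdef
  have hg : 0 < g := norm_pos_iff.mpr hfx
  obtain ⟨u, hu1, huf⟩ := exists_unit_eq_norm (fderiv ℝ p x₁) hfx
  have hcf : Continuous (fderiv ℝ p) := hp.continuous_fderiv (by norm_num)
  -- find a closed ball where the derivative is g/4-close to the one at x₁
  have hopen : IsOpen {y : E | ‖fderiv ℝ p y - fderiv ℝ p x₁‖ < g/4} :=
    isOpen_lt (by fun_prop) continuous_const
  have hmem : x₁ ∈ {y : E | ‖fderiv ℝ p y - fderiv ℝ p x₁‖ < g/4} := by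
    simp only [mem_setOf_eq, sub_self, norm_zero]
    positivity
  obtain ⟨r', hr', hball'⟩ := Metric.isOpen_iff.mp hopen x₁ hmem
  set r : ℝ := r'/2 with hrdef
  have hr : 0 < r := by positivity
  have hballs : ∀ y ∈ closedBall x₁ r, ‖fderiv ℝ p y - fderiv ℝ p x₁‖ < g/4 := by
    intro y hy
    apply hball'
    rw [mem_closedBall] at hy
    rw [mem_ball]
    linarith
  have hder : ∀ y ∈ closedBall x₁ r, g/2 ≤ (fderiv ℝ p y) u := by
    intro y hy
    have h1 : |(fderiv ℝ p y - fderiv ℝ p x₁) u| ≤ ‖fderiv ℝ p y - fderiv ℝ p x₁‖ := by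
      calc |(fderiv ℝ p y - fderiv ℝ p x₁) u| ≤ ‖fderiv ℝ p y - fderiv ℝ p x₁‖ * ‖u‖ :=
            (fderiv ℝ p y - fderiv ℝ p x₁).le_opNorm u
        _ = ‖fderiv ℝ p y - fderiv ℝ p x₁‖ := by rw [hu1, mul_one]
    have h2 := hballs y hy
    have h3 : (fderiv ℝ p y) u = (fderiv ℝ p x₁) u + (fderiv ℝ p y - fderiv ℝ p x₁) u := by
      simp
    rw [h3, huf]
    have := abs_le.mp h1
    linarith [this.1]
  have hlipb : ∀ y ∈ closedBall x₁ r, ‖fderiv ℝ p y‖ ≤ 2*g := by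
    intro y hy
    have h2 := hballs y hy
    calc ‖fderiv ℝ p y‖ = ‖fderiv ℝ p x₁ + (fderiv ℝ p y - fderiv ℝ p x₁)‖ := by
          congr 1; abel
      _ ≤ ‖fderiv ℝ p x₁‖ + ‖fderiv ℝ p y - fderiv ℝ p x₁‖ := norm_add_le _ _
      _ ≤ 2*g := by rw [← hgdef]; linarith
  have hlip : ∀ y ∈ closedBall x₁ r, ∀ z ∈ closedBall x₁ r, ‖p z - p y‖ ≤ 2*g*‖z - y‖ :=
    fun y hy z hz => Convex.norm_image_sub_le_of_norm_fderiv_le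
      (fun w _ => (hdiff w)) hlipb (convex_closedBall x₁ r) hy hz
  set ρ : ℝ := r/8 with hρdef
  have hρ : 0 < ρ := by positivity
  have hρr : ρ ≤ r := by rw [hρdef]; linarith
  have hballsub : ball x₁ ρ ⊆ closedBall x₁ r :=
    subset_trans (ball_subset_ball hρr) ball_subset_closedBall
  -- part (a)
  have parta : ∀ y ∈ ball x₁ ρ, t ≤ p y → y ∈ connectedComponentIn {z | t ≤ p z} x₁ := by
    intro y hy hyp
    set S : Set E := {z | t ≤ p z} with hSdef
    have hyx : ‖y - x₁‖ < ρ := by rwa [mem_ball, dist_eq_norm] at hy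
    -- the three segments
    set seg1 : Set E := (fun s : ℝ => y + s • u) '' (Icc 0 (4*ρ)) with hseg1
    set seg2 : Set E := (fun s : ℝ => x₁ + s • u) '' (Icc 0 (4*ρ)) with hseg2
    set seg3 : Set E := (fun θ : ℝ => (x₁ + θ • (y - x₁)) + (4*ρ) • u) '' (Icc 0 1) with hseg3
    have hconn1 : IsConnected seg1 :=
      (isConnected_Icc (by positivity)).image _ (Continuous.continuousOn (by fun_prop))
    have hconn2 : IsConnected seg2 :=
      (isConnected_Icc (by positivity)).image _ (Continuous.continuousOn (by fun_prop))
    have hconn3 : IsConnected seg3 :=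
      (isConnected_Icc (by norm_num)).image _ (Continuous.continuousOn (by fun_prop))
    have h23 : (seg2 ∩ seg3).Nonempty := by
      refine ⟨x₁ + (4*ρ) • u, ⟨4*ρ, ⟨by positivity, le_refl _⟩, rfl⟩,
        ⟨0, ⟨le_refl _, by norm_num⟩, by simp⟩⟩
    have hT23 : IsConnected (seg2 ∪ seg3) := hconn2.union h23 hconn3
    have h231 : ((seg2 ∪ seg3) ∩ seg1).Nonempty := by
      refine ⟨y + (4*ρ) • u, Or.inr ⟨1, ⟨by norm_num, le_refl _⟩, by simp⟩,
        ⟨4*ρ, ⟨by positivity, le_refl _⟩, rfl⟩⟩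
    have hT : IsConnected (seg2 ∪ seg3 ∪ seg1) := hT23.union h231 hconn1
    -- membership bounds
    have hyr : y ∈ closedBall x₁ r := hballsub hy
    have hx₁r : x₁ ∈ closedBall x₁ r := mem_closedBall_self (le_of_lt hr)
    have hmem1 : ∀ s₀ : ℝ, s₀ ∈ Icc (0:ℝ) (4*ρ) → ∀ w ∈ closedBall x₁ ρ,
        w + s₀ • u ∈ closedBall x₁ r := by
      intro s₀ hs₀ w hw
      rw [mem_closedBall, dist_eq_norm] at hw ⊢
      calc ‖w + s₀ • u - x₁‖ ≤ ‖w - x₁‖ + ‖s₀ • u‖ := by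
            rw [add_sub_right_comm]; exact norm_add_le _ _
        _ ≤ ρ + 4*ρ := by
            rw [norm_smul, hu1, mul_one]
            have : |s₀| ≤ 4*ρ := abs_le.mpr ⟨by linarith [hs₀.1], hs₀.2⟩
            exact add_le_add hw (by simpa [Real.norm_eq_abs] using this)
        _ ≤ r := by rw [hρdef]; linarith
    -- seg1 ⊆ S
    have hsub1 : seg1 ⊆ S := by
      rintro _ ⟨s₀, hs₀, rfl⟩
      have hycb : y ∈ closedBall x₁ ρ := ball_subset_closedBall hy
      have := incr_along hdiff (convex_closedBall x₁ r)
        hder hs₀.1 hyr (hmem1 s₀ hs₀ y hycb)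
      have hg2 : 0 ≤ g/2 * s₀ := mul_nonneg (by positivity) hs₀.1
      simp only [hSdef, mem_setOf_eq]
      nlinarith [hs₀.1]
    have hsub2 : seg2 ⊆ S := by
      rintro _ ⟨s₀, hs₀, rfl⟩
      have hx₁cb : x₁ ∈ closedBall x₁ ρ := mem_closedBall_self (le_of_lt hρ)
      have := incr_along hdiff (convex_closedBall x₁ r)
        hder hs₀.1 hx₁r (hmem1 s₀ hs₀ x₁ hx₁cb)
      simp only [hSdef, mem_setOf_eq]
      nlinarith [hs₀.1]
    have hsub3 : seg3 ⊆ S := by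
      rintro _ ⟨θ, hθ, rfl⟩
      set w : E := x₁ + θ • (y - x₁) with hwdef
      have hwx : ‖w - x₁‖ ≤ ρ := by
        rw [hwdef, add_sub_cancel_left, norm_smul, Real.norm_eq_abs,
          abs_of_nonneg hθ.1]
        calc θ * ‖y - x₁‖ ≤ 1 * ρ := by
              apply mul_le_mul hθ.2 (le_of_lt hyx) (norm_nonneg _) (by norm_num)
          _ = ρ := one_mul ρ
      have hwcb : w ∈ closedBall x₁ ρ := by rwa [mem_closedBall, dist_eq_norm]
      have hwr : w ∈ closedBall x₁ r := closedBall_subset_closedBall hρr hwcb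
      have hpw : t - 2*g*ρ ≤ p w := by
        have := hlip x₁ hx₁r w hwr
        have h1 : |p w - p x₁| ≤ 2*g*‖w - x₁‖ := by
          rwa [Real.norm_eq_abs] at this
        have h2 := (abs_le.mp h1).1
        have h3 : 2*g*‖w - x₁‖ ≤ 2*g*ρ :=
          mul_le_mul_of_nonneg_left hwx (by positivity)
        rw [hx₁] at h2
        linarith
      have h4ρ : (0:ℝ) ≤ 4*ρ := by positivity
      have := incr_along hdiff (convex_closedBall x₁ r)
        hder h4ρ hwr (hmem1 (4*ρ) ⟨h4ρ, le_refl _⟩ w hwcb)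
      simp only [hSdef, mem_setOf_eq]
      nlinarith
    have hTS : seg2 ∪ seg3 ∪ seg1 ⊆ S := by
      intro z hz
      rcases hz with (hz | hz) | hz
      exacts [hsub2 hz, hsub3 hz, hsub1 hz]
    have hx₁T : x₁ ∈ seg2 ∪ seg3 ∪ seg1 :=
      Or.inl (Or.inl ⟨0, ⟨le_refl _, by positivity⟩, by simp⟩)
    have hyT : y ∈ seg2 ∪ seg3 ∪ seg1 :=
      Or.inr ⟨0, ⟨le_refl _, by positivity⟩, by simp⟩
    exact hT.isPreconnected.subset_connectedComponentIn hx₁T hTS hyT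
  -- part (b)
  set c : ℝ := 16 * (volume (closedBall x₁ (2*ρ))).toReal / (ρ * g) with hcdef
  have hbfin : volume (closedBall x₁ (2*ρ)) ≠ ⊤ := measure_closedBall_lt_top.ne
  have hbpos : 0 < (volume (closedBall x₁ (2*ρ))).toReal := by
    apply ENNReal.toReal_pos _ hbfin
    have h0 : (0:ENNReal) < volume (ball x₁ (2*ρ)) := measure_ball_pos volume x₁ (by positivity)
    exact (lt_of_lt_of_le h0 (measure_mono ball_subset_closedBall)).ne'
  have hc : 0 < c := div_pos (by linarith) (by positivity)
  refine ⟨ρ, hρ, c, hc, ρ*g/16, by positivity, parta, ?_⟩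
  intro ε hε hεe
  set τ : ℝ := 8*ε/g with hτdef
  have hτpos : 0 < τ := by positivity
  set A : Set E := ball x₁ ρ ∩ {y | t - 2*ε ≤ p y ∧ p y < t} with hAdef
  have hpm : Measurable p := hp.continuous.measurable
  have hAmeas : MeasurableSet A := measurableSet_ball.inter
    ((measurableSet_le measurable_const hpm).inter (measurableSet_lt hpm measurable_const))
  set N : ℕ := ⌊ρ/τ⌋₊ with hNdef
  have hρτeq : ρ/τ = ρ*g/(8*ε) := by
    rw [hτdef]; field_simp
  have hρτ : 2 < ρ/τ := by
    rw [hρτeq]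
    rw [lt_div_iff₀ (by positivity)]
    linarith
  have hNup : (N:ℝ) ≤ ρ/τ := Nat.floor_le (by positivity)
  have hNlow : ρ/(2*τ) ≤ (N:ℝ) := by
    have h1 : ρ/τ - 1 < (N:ℝ) := Nat.sub_one_lt_floor _
    have h2 : ρ/(2*τ) = (ρ/τ)/2 := by
      rw [div_div ρ τ 2, mul_comm τ 2]
    linarith
  set v : E := τ • u with hvdef
  set f : ℕ → Set E := fun j => (fun z : E => z + (j:ℝ) • v) '' A with hfdef
  have hfvol : ∀ j : ℕ, volume (f j) = volume A := by
    intro j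
    show volume ((fun z : E => z + (j:ℝ) • v) '' A) = volume A
    rw [Set.image_add_right]
    exact measure_preimage_add_right volume _ A
  have hfmeas : ∀ j : ℕ, MeasurableSet (f j) := by
    intro j
    show MeasurableSet ((fun z : E => z + (j:ℝ) • v) '' A)
    rw [Set.image_add_right]
    exact hAmeas.preimage (measurable_add_const _)
  have hstep : ∀ (a a' : E), a ∈ A → a' ∈ A → ∀ k : ℝ, 1 ≤ k → a ≠ a' + k • v := by
    intro a a' ha ha' k hk heq
    have hkτ : (0:ℝ) ≤ k*τ := by positivity
    have h1 : a' + (k*τ) • u = a := by rw [heq, hvdef, smul_smul]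
    have hderball : ∀ y ∈ ball x₁ ρ, g/2 ≤ (fderiv ℝ p y) u :=
      fun y hy => hder y (hballsub hy)
    have hmem2 : a' + (k*τ) • u ∈ ball x₁ ρ := by rw [h1]; exact ha.1
    have hincr := incr_along hdiff (convex_ball x₁ ρ) hderball
      hkτ ha'.1 hmem2
    rw [h1] at hincr
    have hgτ : g/2*(k*τ) = 4*(k*ε) := by rw [hτdef]; field_simp; ring
    rw [hgτ] at hincr
    have h2 := ha.2.2
    have h3 := ha'.2.1
    have hkε : ε ≤ k*ε := by nlinarith
    linarith
  have hdisjlt : ∀ i j : ℕ, i < j → Disjoint (f i) (f j) := by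
    intro i j hlt
    rw [Set.disjoint_left]
    rintro z hzi hzj
    obtain ⟨a, ha, hai⟩ := hzi
    obtain ⟨a', ha', haj⟩ := hzj
    have heq : a' + (j:ℝ) • v = a + (i:ℝ) • v := by
      have h1 : a + (i:ℝ) • v = z := hai
      have h2 : a' + (j:ℝ) • v = z := haj
      rw [h1, h2]
    have hk : a = a' + ((j:ℝ) - (i:ℝ)) • v := by
      have h2 : (a' + ((j:ℝ) - (i:ℝ)) • v) + (i:ℝ) • v = a' + (j:ℝ) • v := by
        rw [add_assoc, ← add_smul]
        ring_nf
      have h3 : a + (i:ℝ) • v = (a' + ((j:ℝ) - (i:ℝ)) • v) + (i:ℝ) • v := by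
        rw [h2, heq]
      exact add_right_cancel h3
    have hk1 : (1:ℝ) ≤ (j:ℝ) - (i:ℝ) := by
      have hij : (i:ℝ) + 1 ≤ (j:ℝ) := by exact_mod_cast hlt
      linarith
    exact hstep a a' ha ha' _ hk1 hk
  have hdisj : (↑(Finset.range N) : Set ℕ).PairwiseDisjoint f := by
    intro i _ j _ hij
    rcases Nat.lt_or_ge i j with h | h
    · exact hdisjlt i j h
    · have hji : j < i := by omega
      exact (hdisjlt j i hji).symm
  have hcover : ⋃ j ∈ Finset.range N, f j ⊆ closedBall x₁ (2*ρ) := by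
    intro z hz
    simp only [Finset.mem_range, mem_iUnion, exists_prop] at hz
    obtain ⟨j, hjN, hzf⟩ := hz
    obtain ⟨a, ha, rfl⟩ := hzf
    rw [mem_closedBall, dist_eq_norm]
    have hjτ : (j:ℝ)*τ ≤ ρ := by
      have hj1 : (j:ℝ) ≤ (N:ℝ) := by exact_mod_cast le_of_lt hjN
      calc (j:ℝ)*τ ≤ (N:ℝ)*τ := by nlinarith
        _ ≤ (ρ/τ)*τ := by nlinarith
        _ = ρ := div_mul_cancel₀ _ (ne_of_gt hτpos)
    have h1 : ‖a - x₁‖ < ρ := by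
      have := ha.1
      rwa [mem_ball, dist_eq_norm] at this
    have h2 : ‖(j:ℝ)•v‖ = (j:ℝ)*τ := by
      rw [hvdef, smul_smul, norm_smul, hu1, mul_one, Real.norm_eq_abs,
        abs_of_nonneg (by positivity)]
    calc ‖a + (j:ℝ)•v - x₁‖ ≤ ‖a - x₁‖ + ‖(j:ℝ)•v‖ := by
          rw [add_sub_right_comm]; exact norm_add_le _ _
      _ ≤ 2*ρ := by rw [h2]; linarith
  have hsum : (N:ENNReal) * volume A ≤ volume (closedBall x₁ (2*ρ)) := by
    have h1 := measure_biUnion_finset (μ := (volume : Measure E)) hdisj (fun j _ => hfmeas j)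
    have h2 : ∑ j ∈ Finset.range N, volume (f j) = (N:ENNReal) * volume A := by
      simp [hfvol, Finset.sum_const, Finset.card_range, nsmul_eq_mul]
    calc (N:ENNReal)*volume A = volume (⋃ j ∈ Finset.range N, f j) := by rw [h1, h2]
      _ ≤ volume (closedBall x₁ (2*ρ)) := measure_mono hcover
  have hAfin : volume A ≠ ⊤ := by
    have hsub : A ⊆ closedBall x₁ (2*ρ) := subset_trans inter_subset_left
      (subset_trans (ball_subset_ball (by linarith)) ball_subset_closedBall)
    exact (lt_of_le_of_lt (measure_mono hsub) measure_closedBall_lt_top).ne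
  have ha0 : (0:ℝ) ≤ (volume A).toReal := ENNReal.toReal_nonneg
  have hreal : (N:ℝ) * (volume A).toReal ≤ (volume (closedBall x₁ (2*ρ))).toReal := by
    have hmono := ENNReal.toReal_mono hbfin hsum
    rwa [ENNReal.toReal_mul, ENNReal.toReal_natCast] at hmono
  have hfinal : (volume A).toReal ≤ c * ε := by
    have h1 : (volume A).toReal * (ρ/(2*τ)) ≤ (volume (closedBall x₁ (2*ρ))).toReal := by
      calc (volume A).toReal * (ρ/(2*τ)) ≤ (volume A).toReal * (N:ℝ) :=
            mul_le_mul_of_nonneg_left hNlow ha0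
        _ = (N:ℝ) * (volume A).toReal := mul_comm _ _
        _ ≤ _ := hreal
    have h2 : (volume A).toReal ≤ (volume (closedBall x₁ (2*ρ))).toReal / (ρ/(2*τ)) :=
      (le_div_iff₀ (by positivity)).mpr h1
    have h3 : (volume (closedBall x₁ (2*ρ))).toReal / (ρ/(2*τ)) = c * ε := by
      rw [hcdef, hτdef]
      field_simp
      ring
    linarith [h2, h3.le, h3.ge]
  calc volume A = ENNReal.ofReal ((volume A).toReal) := (ENNReal.ofReal_toReal hAfin).symm
    _ ≤ ENNReal.ofReal (c*ε) := ENNReal.ofReal_le_ofReal hfinal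

end Aux

/-- Mass of the boundary strip: let `p` be a `C²` probability density on `ℝ^d` with
`‖p‖_∞ = p_max`, whose gradient does not vanish in a neighborhood of the level set
`{p = t}`, and let `C` be a compact connected component of the level set
`L(t) = closure {p ≥ t}` whose boundary has positive minimal curvature radius `κ`
(encoded by the unique-nearest-point property). If `C₋(2ε)` denotes the connected
component of `L(t−2ε)` containing `C`, then there is a constant `D̄ > 0` such that
`μ(C₋(2ε) \ C) ≤ D̄·ε` for all sufficiently small `ε > 0`, where `μ` is the measure
with density `p`. -/
theorem boundary_strip_mass (d : ℕ) (p : EuclideanSpace ℝ (Fin d) → ℝ)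
    (hsmooth : ContDiff ℝ 2 p) (hnonneg : ∀ x, 0 ≤ p x)
    (pmax : ℝ) (hpmax : ∀ x, p x ≤ pmax)
    (μ : Measure (EuclideanSpace ℝ (Fin d)))
    (hμ : μ = volume.withDensity (fun x => ENNReal.ofReal (p x)))
    (hprob : IsProbabilityMeasure μ)
    (t : ℝ) (ht : 0 < t)
    (hgrad : ∃ U : Set (EuclideanSpace ℝ (Fin d)), IsOpen U ∧
      {x | p x = t} ⊆ U ∧ ∀ x ∈ U, fderiv ℝ p x ≠ 0)
    (L : ℝ → Set (EuclideanSpace ℝ (Fin d)))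
    (hL : ∀ s, L s = closure {x | s ≤ p x})
    (x₀ : EuclideanSpace ℝ (Fin d)) (hx₀ : x₀ ∈ L t)
    (C : Set (EuclideanSpace ℝ (Fin d)))
    (hC : C = connectedComponentIn (L t) x₀) (hcomp : IsCompact C)
    (κ : ℝ) (hκ : 0 < κ)
    (hreach : ∀ x ∉ C, Metric.infDist x C < κ →
      ∃! y, y ∈ C ∧ dist x y = Metric.infDist x C) :
    ∃ D > (0 : ℝ), ∃ ε₀ > (0 : ℝ), ∀ ε : ℝ, 0 < ε → ε < ε₀ →
      (μ (connectedComponentIn (L (t - 2 * ε)) x₀ \ C)).toReal ≤ D * ε := by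
  obtain ⟨U, hUopen, hUsub, hUgrad⟩ := hgrad
  have hpc : Continuous p := hsmooth.continuous
  have hLs : ∀ s, L s = {x | s ≤ p x} := fun s => by
    rw [hL s]; exact IsClosed.closure_eq (isClosed_le continuous_const hpc)
  set S : Set (EuclideanSpace ℝ (Fin d)) := {x | t ≤ p x} with hSdef
  have hx₀S : t ≤ p x₀ := by have h := hx₀; rw [hLs t] at h; exact h
  have hCS : C = connectedComponentIn S x₀ := by rw [hC, hLs t]
  have hx₀C : x₀ ∈ C := by rw [hCS]; exact mem_connectedComponentIn hx₀S
  have hCsub : C ⊆ S := by rw [hCS]; exact connectedComponentIn_subset _ _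
  have hCne : C.Nonempty := ⟨x₀, hx₀C⟩
  -- total local data functions
  have H : ∀ x : EuclideanSpace ℝ (Fin d), ∃ ρ c e : ℝ, 0 < ρ ∧ 0 < c ∧ 0 < e ∧ (p x = t →
      ((∀ y ∈ ball x ρ, t ≤ p y → y ∈ connectedComponentIn S x) ∧
       (∀ ε : ℝ, 0 < ε → ε < e →
         volume (ball x ρ ∩ {y | t - 2*ε ≤ p y ∧ p y < t}) ≤ ENNReal.ofReal (c * ε)))) := by
    intro x
    by_cases hx : p x = t
    · obtain ⟨ρ, hρ, c, hc, e, he, h1, h2⟩ := local_data hsmooth hx (hUgrad x (hUsub hx))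
      exact ⟨ρ, c, e, hρ, hc, he, fun _ => ⟨h1, h2⟩⟩
    · exact ⟨1, 1, 1, one_pos, one_pos, one_pos, fun h => absurd h hx⟩
  choose ρf cf ef hρf hcf hef hXf using H
  -- separation property
  have Hsep : ∀ x : EuclideanSpace ℝ (Fin d), ∃ ρ' : ℝ, 0 < ρ' ∧
      (x ∈ C → ∀ y ∈ ball x ρ', t ≤ p y → y ∈ C) := by
    intro x
    by_cases hxC : x ∈ C
    · have hxS : t ≤ p x := hCsub hxC
      rcases eq_or_lt_of_le hxS with heq | hlt
      · refine ⟨ρf x, hρf x, fun _ y hy hyp => ?_⟩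
        have h1 := (hXf x heq.symm).1 y hy hyp
        have h2 : connectedComponentIn S x₀ = connectedComponentIn S x :=
          connectedComponentIn_eq (by rw [← hCS]; exact hxC)
        rw [hCS, h2]; exact h1
      · have hopen : IsOpen {y : EuclideanSpace ℝ (Fin d) | t < p y} :=
          isOpen_lt continuous_const hpc
        obtain ⟨r₂, hr₂, hball₂⟩ := Metric.isOpen_iff.mp hopen x hlt
        refine ⟨r₂, hr₂, fun _ y hy hyp => ?_⟩
        have hsubS : ball x r₂ ⊆ S := fun z hz => le_of_lt (show t < p z from hball₂ hz)
        have h3 : ball x r₂ ⊆ connectedComponentIn S x :=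
          (convex_ball x r₂).isPreconnected.subset_connectedComponentIn
            (mem_ball_self hr₂) hsubS
        have h2 : connectedComponentIn S x₀ = connectedComponentIn S x :=
          connectedComponentIn_eq (by rw [← hCS]; exact hxC)
        rw [hCS, h2]; exact h3 hy
    · exact ⟨1, one_pos, fun h => absurd h hxC⟩
  choose ρs hρs hsep using Hsep
  -- finite subcover of C, get δ
  have hCcover : C ⊆ ⋃ x ∈ C, ball x (ρs x / 2) :=
    fun x hx => mem_biUnion hx (mem_ball_self (half_pos (hρs x)))
  obtain ⟨bC, hbCsub, hbCfin, hbCcover⟩ := hcomp.elim_finite_subcover_image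
    (fun x _ => isOpen_ball) hCcover
  have hbCF_ne : hbCfin.toFinset.Nonempty := by
    have h := hbCcover hx₀C
    simp only [mem_iUnion, exists_prop] at h
    obtain ⟨x, hx1, _⟩ := h
    exact ⟨x, hbCfin.mem_toFinset.mpr hx1⟩
  set δ : ℝ := hbCfin.toFinset.inf' hbCF_ne (fun x => ρs x / 2) with hδdef
  have hδpos : 0 < δ := by
    rw [hδdef, Finset.lt_inf'_iff]
    intro x hx; exact half_pos (hρs x)
  have hsepδ : ∀ z : EuclideanSpace ℝ (Fin d), Metric.infDist z C < δ → t ≤ p z → z ∈ C := by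
    intro z hz hzp
    obtain ⟨y, hyC, hyd⟩ := (Metric.infDist_lt_iff hCne).mp hz
    have hycov := hbCcover hyC
    simp only [mem_iUnion, exists_prop] at hycov
    obtain ⟨x, hxb, hyx⟩ := hycov
    have hxC : x ∈ C := hbCsub hxb
    have hδle : δ ≤ ρs x / 2 := Finset.inf'_le _ (hbCfin.mem_toFinset.mpr hxb)
    have h2 : dist y x < ρs x / 2 := by rwa [mem_ball] at hyx
    have hzx : dist z x < ρs x := by
      have h1 : dist z x ≤ dist z y + dist y x := dist_triangle z y x
      linarith
    exact hsep x hxC z (mem_ball.mpr hzx) hzp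
  -- V
  set V : Set (EuclideanSpace ℝ (Fin d)) := {z | Metric.infDist z C < δ/2} with hVdef
  have hVopen : IsOpen V := isOpen_lt (continuous_infDist_pt C) continuous_const
  have hCV : C ⊆ V := by
    intro x hx
    show Metric.infDist x C < δ/2
    rw [Metric.infDist_zero_of_mem hx]
    linarith
  have hclosV : ∀ z ∈ closure V, Metric.infDist z C ≤ δ/2 := by
    intro z hz
    have h := closure_lt_subset_le (continuous_infDist_pt C)
      (continuous_const : Continuous (fun _ : EuclideanSpace ℝ (Fin d) => δ/2))
    exact h hz
  have hclosVC : ∀ z ∈ closure V, t ≤ p z → z ∈ C := fun z hz hzp =>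
    hsepδ z (lt_of_le_of_lt (hclosV z hz) (by linarith)) hzp
  -- compactness of closure V
  obtain ⟨R, hR⟩ := hcomp.isBounded.subset_ball x₀
  have hVbdd : Bornology.IsBounded V := by
    apply (Metric.isBounded_ball (x := x₀) (r := R + δ)).subset
    intro z hz
    obtain ⟨y, hyC, hyd⟩ := (Metric.infDist_lt_iff hCne).mp (show Metric.infDist z C < δ/2 from hz)
    have h1 : dist y x₀ < R := by have := hR hyC; rwa [mem_ball] at this
    have h2 : dist z x₀ ≤ dist z y + dist y x₀ := dist_triangle z y x₀
    rw [mem_ball]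
    linarith
  have hKcomp : IsCompact (closure V) :=
    isCompact_of_isClosed_isBounded isClosed_closure hVbdd.closure
  -- frontier bound η
  have hfrsub : frontier V ⊆ closure V := frontier_subset_closure
  have hfrcomp : IsCompact (frontier V) :=
    hKcomp.of_isClosed_subset isClosed_frontier hfrsub
  have hfrlt : ∀ z ∈ frontier V, p z < t := by
    intro z hz
    by_contra h
    push_neg at h
    have hzC : z ∈ C := hclosVC z (hfrsub hz) h
    have hzV : z ∈ V := hCV hzC
    rw [hVopen.frontier_eq] at hz
    exact hz.2 hzV
  obtain ⟨η, hηpos, hηbd⟩ : ∃ η > (0:ℝ), ∀ z ∈ frontier V, p z ≤ t - η := by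
    rcases eq_empty_or_nonempty (frontier V) with he | hne
    · exact ⟨1, one_pos, fun z hz => absurd (he ▸ hz) (notMem_empty z)⟩
    · obtain ⟨z₀, hz₀, hmax⟩ := hfrcomp.exists_isMaxOn hne hpc.continuousOn
      refine ⟨t - p z₀, by linarith [hfrlt z₀ hz₀], fun z hz => ?_⟩
      have h5 : p z ≤ p z₀ := hmax hz
      linarith
  -- Sig cover
  set Sig : Set (EuclideanSpace ℝ (Fin d)) := closure V ∩ {z | p z = t} with hSigdef
  have hSigcomp : IsCompact Sig := hKcomp.inter_right (isClosed_eq hpc continuous_const)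
  have hSigcover : Sig ⊆ ⋃ x ∈ Sig, ball x (ρf x) :=
    fun x hx => mem_biUnion hx (mem_ball_self (hρf x))
  obtain ⟨bS, hbSsub, hbSfin, hbScover⟩ := hSigcomp.elim_finite_subcover_image
    (fun x _ => isOpen_ball) hSigcover
  set W : Set (EuclideanSpace ℝ (Fin d)) := ⋃ x ∈ bS, ball x (ρf x) with hWdef
  have hWopen : IsOpen W := isOpen_biUnion (fun x _ => isOpen_ball)
  -- Q and η₂
  set Q : Set (EuclideanSpace ℝ (Fin d)) := (closure V ∩ {z | p z ≤ t}) \ W with hQdef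
  have hQcomp : IsCompact Q :=
    (hKcomp.inter_right (isClosed_le hpc continuous_const)).diff hWopen
  have hQlt : ∀ z ∈ Q, p z < t := by
    intro z hz
    have h12 : p z ≤ t := hz.1.2
    rcases lt_or_eq_of_le h12 with h | h
    · exact h
    · exact absurd (hbScover ⟨hz.1.1, h⟩) hz.2
  obtain ⟨η₂, hη₂pos, hη₂bd⟩ : ∃ η₂ > (0:ℝ), ∀ z ∈ Q, p z ≤ t - η₂ := by
    rcases eq_empty_or_nonempty Q with he | hne
    · exact ⟨1, one_pos, fun z hz => absurd (he ▸ hz) (notMem_empty z)⟩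
    · obtain ⟨z₀, hz₀, hmax⟩ := hQcomp.exists_isMaxOn hne hpc.continuousOn
      refine ⟨t - p z₀, by linarith [hQlt z₀ hz₀], fun z hz => ?_⟩
      have h5 : p z ≤ p z₀ := hmax hz
      linarith
  -- constants
  have hpmax0 : 0 ≤ pmax := le_trans (hnonneg x₀) (hpmax x₀)
  set bSF := hbSfin.toFinset with hbSFdef
  set Csum : ℝ := ∑ x ∈ bSF, cf x with hCsumdef
  have hCsum0 : 0 ≤ Csum := Finset.sum_nonneg (fun x _ => le_of_lt (hcf x))
  set D : ℝ := pmax * Csum + 1 with hDdef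
  have hD : 0 < D := by nlinarith [mul_nonneg hpmax0 hCsum0]
  set ε₀ : ℝ := min (min (η/4) (η₂/4))
    (if hne : bSF.Nonempty then bSF.inf' hne ef else 1) with hε₀def
  have hε₀pos : 0 < ε₀ := by
    apply lt_min (lt_min (by linarith) (by linarith))
    split_ifs with hne
    · rw [Finset.lt_inf'_iff]; intro x hx; exact hef x
    · exact one_pos
  refine ⟨D, hD, ε₀, hε₀pos, ?_⟩
  intro ε hε hεlt
  have hεη : ε < η/4 := lt_of_lt_of_le hεlt (le_trans (min_le_left _ _) (min_le_left _ _))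
  have hεη₂ : ε < η₂/4 := lt_of_lt_of_le hεlt (le_trans (min_le_left _ _) (min_le_right _ _))
  set T := connectedComponentIn (L (t - 2*ε)) x₀ with hTdef
  have hLt2 : L (t - 2*ε) = {x | t - 2*ε ≤ p x} := hLs _
  have hTsub : T ⊆ {x | t - 2*ε ≤ p x} := by
    rw [hTdef, hLt2]; exact connectedComponentIn_subset _ _
  have hTpre : IsPreconnected T := isPreconnected_connectedComponentIn
  have hx₀T : x₀ ∈ T := by
    rw [hTdef]
    apply mem_connectedComponentIn
    rw [hLt2]
    show t - 2*ε ≤ p x₀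
    linarith
  have hTV : T ⊆ V := by
    have hsplit : T ⊆ V ∪ (closure V)ᶜ := by
      intro z hz
      by_cases h1 : z ∈ closure V
      · left
        by_contra h2
        have hzfr : z ∈ frontier V := by
          rw [hVopen.frontier_eq]; exact ⟨h1, h2⟩
        have h3 := hηbd z hzfr
        have h4 := hTsub hz
        simp only [mem_setOf_eq] at h4
        linarith
      · exact Or.inr h1
    have hdisj2 : Disjoint V (closure V)ᶜ := by
      rw [Set.disjoint_left]
      intro z hzV hzc
      exact hzc (subset_closure hzV)
    rcases hTpre.subset_or_subset hVopen (isOpen_compl_iff.mpr isClosed_closure)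
      hdisj2 hsplit with h | h
    · exact h
    · exact absurd (h hx₀T) (not_not_intro (subset_closure (hCV hx₀C)))
  set Strip : Set (EuclideanSpace ℝ (Fin d)) :=
    closure V ∩ {y | t - 2*ε ≤ p y ∧ p y < t} with hStripdef
  have hTC : T \ C ⊆ Strip := by
    intro z hz
    have hzV : z ∈ V := hTV hz.1
    have hzcl : z ∈ closure V := subset_closure hzV
    have h1 : t - 2*ε ≤ p z := hTsub hz.1
    have h2 : p z < t := by
      by_contra h
      push_neg at h
      exact hz.2 (hclosVC z hzcl h)
    exact ⟨hzcl, h1, h2⟩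
  have hstripW : Strip ⊆
      ⋃ x ∈ bSF, (ball x (ρf x) ∩ {y | t - 2*ε ≤ p y ∧ p y < t}) := by
    intro z hz
    have hzW : z ∈ W := by
      by_contra h
      have hzQ : z ∈ Q := ⟨⟨hz.1, le_of_lt hz.2.2⟩, h⟩
      have h3 := hη₂bd z hzQ
      have h4 := hz.2.1
      linarith
    rw [hWdef] at hzW
    simp only [mem_iUnion, exists_prop] at hzW
    obtain ⟨x, hxbS, hzball⟩ := hzW
    exact mem_biUnion (hbSfin.mem_toFinset.mpr hxbS) ⟨hzball, hz.2⟩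
  have hpm : Measurable p := hpc.measurable
  have hStripMeas : MeasurableSet Strip :=
    (isClosed_closure.measurableSet).inter
      ((measurableSet_le measurable_const hpm).inter
        (measurableSet_lt hpm measurable_const))
  have hμStrip : μ Strip ≤ ENNReal.ofReal pmax * volume Strip := by
    rw [hμ, withDensity_apply _ hStripMeas]
    calc ∫⁻ a in Strip, ENNReal.ofReal (p a) ∂volume
        ≤ ∫⁻ _ in Strip, ENNReal.ofReal pmax ∂volume :=
          lintegral_mono (fun a => ENNReal.ofReal_le_ofReal (hpmax a))
      _ = ENNReal.ofReal pmax * volume Strip := setLIntegral_const _ _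
  have hperball : ∀ x ∈ bSF,
      volume (ball x (ρf x) ∩ {y | t - 2*ε ≤ p y ∧ p y < t}) ≤ ENNReal.ofReal (cf x * ε) := by
    intro x hx
    have hxbS : x ∈ bS := hbSfin.mem_toFinset.mp hx
    have hxSig : x ∈ Sig := hbSsub hxbS
    have hxt : p x = t := hxSig.2
    have hne : bSF.Nonempty := ⟨x, hx⟩
    have hεef : ε < ef x := by
      have h1 : ε₀ ≤ ef x := by
        rw [hε₀def]
        refine le_trans (min_le_right _ _) ?_
        rw [dif_pos hne]
        exact Finset.inf'_le _ hx
      linarith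
    exact (hXf x hxt).2 ε hε hεef
  have hvolStrip : volume Strip ≤ ENNReal.ofReal (Csum * ε) := by
    calc volume Strip
        ≤ volume (⋃ x ∈ bSF, (ball x (ρf x) ∩ {y | t - 2*ε ≤ p y ∧ p y < t})) :=
          measure_mono hstripW
      _ ≤ ∑ x ∈ bSF, volume (ball x (ρf x) ∩ {y | t - 2*ε ≤ p y ∧ p y < t}) :=
          measure_biUnion_finset_le _ _
      _ ≤ ∑ x ∈ bSF, ENNReal.ofReal (cf x * ε) := Finset.sum_le_sum hperball
      _ = ENNReal.ofReal (Csum * ε) := by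
          rw [← ENNReal.ofReal_sum_of_nonneg
            (fun x _ => mul_nonneg (le_of_lt (hcf x)) (le_of_lt hε))]
          rw [← Finset.sum_mul, hCsumdef]
  have hfinal : μ (T \ C) ≤ ENNReal.ofReal (D * ε) := by
    calc μ (T \ C) ≤ μ Strip := measure_mono hTC
      _ ≤ ENNReal.ofReal pmax * ENNReal.ofReal (Csum * ε) :=
          le_trans hμStrip (mul_le_mul_right hvolStrip _)
      _ = ENNReal.ofReal (pmax * (Csum * ε)) := (ENNReal.ofReal_mul hpmax0).symm
      _ ≤ ENNReal.ofReal (D * ε) := by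
          apply ENNReal.ofReal_le_ofReal
          rw [hDdef]
          nlinarith [hε, mul_nonneg hpmax0 hCsum0]
  exact ENNReal.toReal_le_of_le_ofReal (mul_nonneg (le_of_lt hD) (le_of_lt hε)) hfinal
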